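/- For every n ≥ 0, the number of words of length 2n over the alphabet {U, D} in which every nonempty prefix contains a different number of U's and D's equals binom(2n, n). -/

import Mathlib

/-- Words over `{U, D}` encoded as `List Bool`, `true` = U, `false` = D. -/
abbrev UDWord := List Bool

/-- Every nonempty prefix contains different numbers of U's and D's. -/
def AllPrefixesUnbalanced (w : UDWord) : Prop :=
  ∀ t, 0 < t → t ≤ w.length →
    (w.take t).count true ≠ (w.take t).count false

namespace UPC

/-- every nonempty prefix has more U's than D's -/
def Pos (w : List Bool) : Prop :=
  ∀ t, 0 < t → t ≤ w.length → (w.take t).count false < (w.take t).count true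

/-- every nonempty prefix has more D's than U's -/
def Neg (w : List Bool) : Prop :=
  ∀ t, 0 < t → t ≤ w.length → (w.take t).count true < (w.take t).count false

lemma count_tf (l : List Bool) : l.count true + l.count false = l.length := by
  induction l with
  | nil => rfl
  | cons b l ih => cases b <;> simp [List.count_cons] <;> omega

instance finite_aux (m : ℕ) (P : List Bool → Prop) :
    Finite {w : List Bool // w.length = m ∧ P w} := by
  have h : {w : List Bool | w.length = m ∧ P w}.Finite :=
    (List.finite_length_eq Bool m).subset (fun w hw => hw.1)
  exact h.to_subtype

lemma step_counts (w : List Bool) (t : ℕ) (ht : t < w.length) :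
    (w.take (t+1)).count true + (w.take (t+1)).count false = t+1 ∧
    (w.take t).count true + (w.take t).count false = t ∧
    (w.take t).count true ≤ (w.take (t+1)).count true ∧
    (w.take t).count false ≤ (w.take (t+1)).count false := by
  have h1 : (w.take (t+1)).length = t+1 := by
    simp [List.length_take]; omega
  have h2 : (w.take t).length = t := by
    simp [List.length_take]; omega
  have hpre : List.Sublist (w.take t) (w.take (t+1)) := by
    have h3 : (w.take (t+1)).take t = w.take t := by
      rw [List.take_take]; congr 1; omega
    exact h3 ▸ (List.take_prefix t (w.take (t+1))).sublist
  refine ⟨?_, ?_, hpre.count_le true, hpre.count_le false⟩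
  · rw [count_tf, h1]
  · rw [count_tf, h2]

lemma pos_of_head (l : List Bool) (hA : AllPrefixesUnbalanced (true :: l)) :
    Pos (true :: l) := by
  intro t
  induction t with
  | zero => omega
  | succ t ih =>
    intro ht htl
    rcases Nat.eq_zero_or_pos t with h0 | ht1
    · subst h0; simp
    · have prev := ih ht1 (by omega)
      obtain ⟨s1, s2, s3, s4⟩ := step_counts (true :: l) t (by omega)
      have hne := hA (t+1) (by omega) htl
      omega

lemma neg_of_head (l : List Bool) (hA : AllPrefixesUnbalanced (false :: l)) :
    Neg (false :: l) := by
  intro t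
  induction t with
  | zero => omega
  | succ t ih =>
    intro ht htl
    rcases Nat.eq_zero_or_pos t with h0 | ht1
    · subst h0; simp
    · have prev := ih ht1 (by omega)
      obtain ⟨s1, s2, s3, s4⟩ := step_counts (false :: l) t (by omega)
      have hne := hA (t+1) (by omega) htl
      omega

lemma pos_or_neg (w : List Bool) (hA : AllPrefixesUnbalanced w) : Pos w ∨ Neg w := by
  match w with
  | [] => exact Or.inl (fun t ht htl => by simp at htl; omega)
  | true :: l => exact Or.inl (pos_of_head l hA)
  | false :: l => exact Or.inr (neg_of_head l hA)

lemma pos_unbalanced {w : List Bool} (h : Pos w) : AllPrefixesUnbalanced w :=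
  fun t ht htl => (h t ht htl).ne'

lemma neg_unbalanced {w : List Bool} (h : Neg w) : AllPrefixesUnbalanced w :=
  fun t ht htl => (h t ht htl).ne

/-- number of positive words of length `m` with `d` down-steps -/
noncomputable def c (m d : ℕ) : ℕ :=
  Nat.card {w : List Bool // w.length = m ∧ Pos w ∧ w.count false = d}

lemma c_zero (m : ℕ) : c m 0 = 1 := by
  have hrep : Pos (List.replicate m true) := by
    intro t ht htl
    simp only [List.length_replicate] at htl
    rw [List.take_replicate]
    have hmin : t ⊓ m = t := by omega
    rw [hmin]
    have e1 : (List.replicate t true).count false = 0 := by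
      simp [List.count_replicate]
    have e2 : (List.replicate t true).count true = t := by
      simp [List.count_replicate]
    omega
  have hkey : ∀ w : List Bool, w.length = m → w.count false = 0 → w = List.replicate m true := by
    intro w h1 h3
    have hall : ∀ b ∈ w, b = true := by
      intro b hb
      cases b
      · exact absurd hb (List.count_eq_zero.mp h3)
      · rfl
    have hw : w = List.replicate w.length true := List.eq_replicate_length.mpr hall
    exact hw.trans (by rw [h1])
  haveI : Nonempty {w : List Bool // w.length = m ∧ Pos w ∧ w.count false = 0} :=
    ⟨⟨List.replicate m true, List.length_replicate, hrep, by
      simp [List.count_replicate]⟩⟩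
  haveI : Subsingleton {w : List Bool // w.length = m ∧ Pos w ∧ w.count false = 0} := by
    constructor
    rintro ⟨w, h1, h2, h3⟩ ⟨v, h4, h5, h6⟩
    exact Subtype.ext ((hkey w h1 h3).trans (hkey v h4 h6).symm)
  exact Nat.card_unique

lemma c_eq_zero (m d : ℕ) (hm : 1 ≤ m) (h : m ≤ 2 * d) : c m d = 0 := by
  haveI : IsEmpty {w : List Bool // w.length = m ∧ Pos w ∧ w.count false = d} := by
    refine ⟨?_⟩
    rintro ⟨w, h1, h2, h3⟩
    have := h2 m hm (le_of_eq h1.symm)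
    rw [List.take_of_length_le (le_of_eq h1)] at this
    have hc := count_tf w
    omega
  exact Nat.card_of_isEmpty

/-- the basic last-step recurrence -/
lemma c_rec (m d : ℕ) (h : 2 * (d + 1) < m + 1) :
    c (m + 1) (d + 1) = c m (d + 1) + c m d := by
  classical
  set T := {w : List Bool // w.length = m + 1 ∧ Pos w ∧ w.count false = d + 1}
  set A := {w : List Bool // w.length = m ∧ Pos w ∧ w.count false = d + 1}
  set B := {w : List Bool // w.length = m ∧ Pos w ∧ w.count false = d}
  have key : ∀ (w : List Bool) (b : Bool), w.length = m → Pos w →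
      ((w.count false = d + 1 ∧ b = true) ∨ (w.count false = d ∧ b = false)) →
      (w ++ [b]).length = m + 1 ∧ Pos (w ++ [b]) ∧ (w ++ [b]).count false = d + 1 := by
    rintro w b h1 h2 h3
    have hlen : (w ++ [b]).length = m + 1 := by simp [h1]
    have hct : (w ++ [b]).count true + (w ++ [b]).count false = m + 1 := by
      rw [count_tf, hlen]
    have hcf : (w ++ [b]).count false = d + 1 := by
      rcases h3 with ⟨h3, rfl⟩ | ⟨h3, rfl⟩ <;> simp [List.count_append, h3]
    refine ⟨hlen, ?_, hcf⟩
    intro t ht htl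
    rcases Nat.lt_or_ge t (m + 1) with hlt | hge
    · have htw : t ≤ w.length := by omega
      rw [List.take_append_of_le_length htw]
      exact h2 t ht (by omega)
    · have : t = m + 1 := by rw [hlen] at htl; omega
      subst this
      rw [List.take_of_length_le (le_of_eq hlen)]
      omega
  let f : A ⊕ B → T := Sum.elim
    (fun x => ⟨x.1 ++ [true], key x.1 true x.2.1 x.2.2.1 (Or.inl ⟨x.2.2.2, rfl⟩)⟩)
    (fun x => ⟨x.1 ++ [false], key x.1 false x.2.1 x.2.2.1 (Or.inr ⟨x.2.2.2, rfl⟩)⟩)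
  have hbij : Function.Bijective f := by
    constructor
    · rintro (⟨w, hw⟩ | ⟨w, hw⟩) (⟨v, hv⟩ | ⟨v, hv⟩) hfe <;>
        have hval := congrArg Subtype.val hfe <;>
        simp only [f, Sum.elim_inl, Sum.elim_inr] at hval
      · exact congrArg Sum.inl (Subtype.ext (List.append_left_injective [true] hval))
      · exfalso
        have h5 := congrArg List.getLast? hval
        simp only [List.getLast?_concat] at h5
        simp at h5
      · exfalso
        have h5 := congrArg List.getLast? hval
        simp only [List.getLast?_concat] at h5
        simp at h5
      · exact congrArg Sum.inr (Subtype.ext (List.append_left_injective [false] hval))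
    · rintro ⟨w, h1, h2, h3⟩
      rcases List.eq_nil_or_concat' w with rfl | ⟨w', b, rfl⟩
      · exact absurd h1 (by simp)
      · have hlen' : w'.length = m := by simp at h1; omega
        have hpos' : Pos w' := by
          intro t ht htl
          have := h2 t ht (by simp [hlen']; omega)
          rwa [List.take_append_of_le_length htl] at this
        cases b
        · have hcf' : w'.count false = d := by simp [List.count_append] at h3; omega
          exact ⟨Sum.inr ⟨w', hlen', hpos', hcf'⟩, rfl⟩
        · have hcf' : w'.count false = d + 1 := by simp [List.count_append] at h3; omega
          exact ⟨Sum.inl ⟨w', hlen', hpos', hcf'⟩, rfl⟩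
  have : Nat.card T = Nat.card (A ⊕ B) := (Nat.card_congr (Equiv.ofBijective f hbij)).symm
  rw [c, c, c]
  show Nat.card T = Nat.card A + Nat.card B
  rw [this, Nat.card_sum]

/-- ballot-number closed form, additive version -/
lemma c_closed : ∀ m d : ℕ, 2 * d + 1 ≤ m →
    c (m + 1) (d + 1) + Nat.choose m d = Nat.choose m (d + 1) := by
  intro m
  induction m with
  | zero => intro d hd; omega
  | succ m ih =>
    intro d hd
    rcases Nat.lt_or_ge (2 * d + 1) (m + 1) with h2 | h2
    · -- 2d < m
      cases d with
      | zero =>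
        show c (m + 2) 1 + Nat.choose (m + 1) 0 = Nat.choose (m + 1) 1
        have hrec : c (m + 2) 1 = c (m + 1) 1 + c (m + 1) 0 :=
          c_rec (m + 1) 0 (by omega)
        have hp2 : Nat.choose (m + 1) 1 = Nat.choose m 0 + Nat.choose m 1 :=
          Nat.choose_succ_succ m 0
        have h0 : c (m + 1) 0 = 1 := c_zero (m + 1)
        have ih0 : c (m + 1) 1 + Nat.choose m 0 = Nat.choose m 1 := ih 0 (by omega)
        have hc0 : Nat.choose m 0 = 1 := Nat.choose_zero_right m
        have hc0' : Nat.choose (m + 1) 0 = 1 := Nat.choose_zero_right (m + 1)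
        omega
      | succ d' =>
        show c (m + 2) (d' + 2) + Nat.choose (m + 1) (d' + 1) = Nat.choose (m + 1) (d' + 2)
        have hrec : c (m + 2) (d' + 2) = c (m + 1) (d' + 2) + c (m + 1) (d' + 1) :=
          c_rec (m + 1) (d' + 1) (by omega)
        have ih1 : c (m + 1) (d' + 2) + Nat.choose m (d' + 1) = Nat.choose m (d' + 2) :=
          ih (d' + 1) (by omega)
        have ih2 : c (m + 1) (d' + 1) + Nat.choose m d' = Nat.choose m (d' + 1) :=
          ih d' (by omega)
        have hp1 : Nat.choose (m + 1) (d' + 1) = Nat.choose m d' + Nat.choose m (d' + 1) :=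
          Nat.choose_succ_succ m d'
        have hp2 : Nat.choose (m + 1) (d' + 2) = Nat.choose m (d' + 1) + Nat.choose m (d' + 2) :=
          Nat.choose_succ_succ m (d' + 1)
        omega
    · -- 2d + 1 = m + 1, i.e. m = 2d
      have hm : m = 2 * d := by omega
      subst hm
      show c (2 * d + 2) (d + 1) + Nat.choose (2 * d + 1) d = Nat.choose (2 * d + 1) (d + 1)
      have h0 : c (2 * d + 2) (d + 1) = 0 := c_eq_zero (2 * d + 2) (d + 1) (by omega) (by omega)
      have hsym : Nat.choose (2 * d + 1) (d + 1) = Nat.choose (2 * d + 1) d := by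
        have hs := Nat.choose_symm (n := 2 * d + 1) (k := d + 1) (by omega)
        have he : 2 * d + 1 - (d + 1) = d := by omega
        rw [he] at hs
        omega
      omega

/-- partition the positive words of length m by their number of down-steps -/
lemma card_pos_eq_sum (m : ℕ) :
    Nat.card {w : List Bool // w.length = m ∧ Pos w} =
      ∑ d ∈ Finset.range (m + 1), c m d := by
  classical
  let F : Fin (m + 1) → Type := fun d =>
    {w : List Bool // w.length = m ∧ Pos w ∧ w.count false = (d : ℕ)}
  let E : {w : List Bool // w.length = m ∧ Pos w} ≃ Σ d : Fin (m + 1), F d :=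
    { toFun := fun x => ⟨⟨x.1.count false, by
        have : x.1.count false ≤ x.1.length := List.count_le_length
        rw [x.2.1] at this; omega⟩, ⟨x.1, x.2.1, x.2.2, rfl⟩⟩
      invFun := fun x => ⟨x.2.1, x.2.2.1, x.2.2.2.1⟩
      left_inv := fun x => rfl
      right_inv := by
        rintro ⟨⟨d, hd⟩, ⟨w, h1, h2, h3⟩⟩
        simp only [Fin.val_mk] at h3
        subst h3
        rfl }
  haveI : ∀ d : Fin (m + 1), Fintype (F d) := fun d => Fintype.ofFinite _
  rw [Nat.card_congr E, Nat.card_eq_fintype_card, Fintype.card_sigma]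
  rw [← Fin.sum_univ_eq_sum_range (fun d => c m d) (m + 1)]
  congr 1
  funext d
  rw [c, Nat.card_eq_fintype_card]

lemma card_pos (n : ℕ) :
    Nat.card {w : List Bool // w.length = 2 * (n + 1) ∧ Pos w} =
      Nat.choose (2 * n + 1) n := by
  rw [card_pos_eq_sum]
  have hzero : ∀ d ∈ Finset.range (2 * (n + 1) + 1), d ∉ Finset.range (n + 1) →
      c (2 * (n + 1)) d = 0 := by
    intro d _ hd
    simp only [Finset.mem_range] at hd
    exact c_eq_zero _ _ (by omega) (by omega)
  rw [← Finset.sum_subset (Finset.range_subset_range.mpr (by omega)) hzero]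
  -- now ∑ d in range (n+1), c (2*(n+1)) d = choose (2n+1) n
  have key : ∀ k : ℕ, k ≤ n →
      ∑ d ∈ Finset.range (k + 1), c (2 * (n + 1)) d = Nat.choose (2 * n + 1) k := by
    intro k
    induction k with
    | zero =>
      intro _
      simp [c_zero]
    | succ k ihk =>
      intro hk
      rw [Finset.sum_range_succ, ihk (by omega)]
      have hcl := c_closed (2 * n + 1) k (by omega)
      have he : 2 * n + 1 + 1 = 2 * (n + 1) := by omega
      rw [he] at hcl
      omega
  exact key n le_rfl

lemma count_map_not (l : List Bool) :
    (l.map not).count true = l.count false ∧ (l.map not).count false = l.count true := by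
  induction l with
  | nil => simp
  | cons b l ih => cases b <;> simp [List.count_cons] <;> omega

lemma neg_iff_map (w : List Bool) : Neg w ↔ Pos (w.map not) := by
  constructor <;> intro h t ht htl
  · rw [← List.map_take]
    rw [(count_map_not (w.take t)).1, (count_map_not (w.take t)).2]
    exact h t ht (by simpa using htl)
  · have := h t ht (by simpa using htl)
    rw [← List.map_take, (count_map_not (w.take t)).1, (count_map_not (w.take t)).2] at this
    exact this

lemma map_not_not (w : List Bool) : (w.map not).map not = w := by
  rw [List.map_map]
  have : (not ∘ not) = id := by funext b; cases b <;> rfl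
  rw [this, List.map_id]

lemma card_neg_eq_card_pos (m : ℕ) :
    Nat.card {w : List Bool // w.length = m ∧ Neg w} =
      Nat.card {w : List Bool // w.length = m ∧ Pos w} := by
  apply Nat.card_congr
  refine ⟨fun x => ⟨x.1.map not, by simpa using x.2.1, (neg_iff_map x.1).mp x.2.2⟩,
          fun x => ⟨x.1.map not, by simpa using x.2.1, ?_⟩, fun x => ?_, fun x => ?_⟩
  · rw [neg_iff_map, map_not_not]
    exact x.2.2
  · exact Subtype.ext (map_not_not x.1)
  · exact Subtype.ext (map_not_not x.1)

end UPC

theorem unbalanced_prefix_count (n : ℕ) :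
    Nat.card {w : UDWord // w.length = 2 * n ∧ AllPrefixesUnbalanced w} =
      Nat.choose (2 * n) n := by
  classical
  cases n with
  | zero =>
    haveI : Unique {w : UDWord // w.length = 2 * 0 ∧ AllPrefixesUnbalanced w} := by
      refine ⟨⟨⟨[], by simp, fun t ht htl => by simp at htl; omega⟩⟩, ?_⟩
      rintro ⟨w, h1, h2⟩
      apply Subtype.ext
      simpa using List.length_eq_zero_iff.mp (by simpa using h1)
    rw [show Nat.choose (2 * 0) 0 = 1 from rfl]
    exact Nat.card_unique
  | succ n =>
    set m := 2 * (n + 1) with hm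
    set A := {w : UDWord // w.length = m ∧ AllPrefixesUnbalanced w}
    set P := {w : List Bool // w.length = m ∧ UPC.Pos w}
    set N := {w : List Bool // w.length = m ∧ UPC.Neg w}
    let f : P ⊕ N → A := Sum.elim
      (fun x => ⟨x.1, x.2.1, UPC.pos_unbalanced x.2.2⟩)
      (fun x => ⟨x.1, x.2.1, UPC.neg_unbalanced x.2.2⟩)
    have hbij : Function.Bijective f := by
      constructor
      · rintro (⟨w, hw1, hw2⟩ | ⟨w, hw1, hw2⟩) (⟨v, hv1, hv2⟩ | ⟨v, hv1, hv2⟩) hfe <;>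
          have hval := congrArg Subtype.val hfe <;>
          simp only [f, Sum.elim_inl, Sum.elim_inr] at hval
        · exact congrArg Sum.inl (Subtype.ext hval)
        · exfalso
          subst hval
          have h1 := hw2 1 (by omega) (by omega)
          have h2 := hv2 1 (by omega) (by omega)
          omega
        · exfalso
          subst hval
          have h1 := hw2 1 (by omega) (by omega)
          have h2 := hv2 1 (by omega) (by omega)
          omega
        · exact congrArg Sum.inr (Subtype.ext hval)
      · rintro ⟨w, h1, h2⟩
        rcases UPC.pos_or_neg w h2 with hp | hn
        · exact ⟨Sum.inl ⟨w, h1, hp⟩, rfl⟩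
        · exact ⟨Sum.inr ⟨w, h1, hn⟩, rfl⟩
    have hcard : Nat.card A = Nat.card P + Nat.card N := by
      rw [← Nat.card_congr (Equiv.ofBijective f hbij), Nat.card_sum]
    show Nat.card A = Nat.choose m (n + 1)
    rw [hcard, UPC.card_neg_eq_card_pos, UPC.card_pos]
    have h1 : Nat.choose m (n + 1) = Nat.choose (2 * n + 1) n + Nat.choose (2 * n + 1) (n + 1) := by
      have := Nat.choose_succ_succ (2 * n + 1) n
      rw [hm]
      have he : 2 * (n + 1) = (2 * n + 1) + 1 := by omega
      rw [he]
      exact this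
    have h2 : Nat.choose (2 * n + 1) (n + 1) = Nat.choose (2 * n + 1) n := by
      have := Nat.choose_symm (n := 2 * n + 1) (k := n + 1) (by omega)
      have he : 2 * n + 1 - (n + 1) = n := by omega
      rw [he] at this
      omega
    omega
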